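/- A string S is a minimal common supersequence of strings A and B if and only if there exist an integer l ≥ 1 and decompositions A = A₁·A₂·⋯·A_l, B = B₁·B₂·⋯·B_l and S = S₁·S₂·⋯·S_l into consecutive (possibly empty) blocks such that for every i ∈ {1,…,l}: (1) the block A_i fills S_i in context (A₁⋯A_{i−1}, A_{i+1}⋯A_l), and the block B_i fills S_i in context (B₁⋯B_{i−1}, B_{i+1}⋯B_l); and (2) S_i = A_i or S_i = B_i (equality of strings). -/

import Mathlib

/-- `C` is a common supersequence of `A` and `B`. -/
def IsCommonSupseq {α : Type*} (A B C : List α) : Prop :=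
  A.Sublist C ∧ B.Sublist C

/-- `C` is a minimal common supersequence of `A` and `B`. -/
def IsMinimalCommonSupseq {α : Type*} (A B C : List α) : Prop :=
  IsCommonSupseq A B C ∧ ∀ C', C'.Sublist C → C' ≠ C → ¬ IsCommonSupseq A B C'

/-- For a string written as a concatenation `P ++ M ++ Q`, the block `M` fills
`T` in context `(P, Q)`: `M` is a subsequence of `T`; if `P` is nonempty with
last character `c`, then `c·M` is not a subsequence of `T`; and if `Q` is
nonempty with first character `d`, then `M·d` is not a subsequence of `T`. -/
def FillsBlock {α : Type*} (P M Q T : List α) : Prop :=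
  M.Sublist T ∧
  (∀ c, P.getLast? = some c → ¬ (c :: M).Sublist T) ∧
  (∀ d, Q.head? = some d → ¬ (M ++ [d]).Sublist T)

namespace MCSAux
open List
variable {α : Type*}

/-- If `X ++ y :: Y` embeds in `T ++ U` but `X ++ [y]` does not embed in `T`,
then `y :: Y` embeds in `U`. -/
lemma split_mid {X Y T U : List α} {y : α} (h : X ++ y :: Y <+ T ++ U)
    (hX : ¬ X ++ [y] <+ T) : y :: Y <+ U := by
  rcases sublist_append_iff.1 h with ⟨P, Q, hPQ, hPT, hQU⟩
  rcases append_eq_append_iff.1 hPQ with ⟨a', h1, h2⟩ | ⟨c', h1, h2⟩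
  · -- h1 : P = X ++ a', h2 : y :: Y = a' ++ Q
    cases a' with
    | nil =>
      simp at h2; exact h2 ▸ hQU
    | cons z a'' =>
      exfalso
      apply hX
      obtain ⟨rfl, rfl⟩ : y = z ∧ Y = a'' ++ Q := by simpa using h2
      have : X ++ [y] <+ X ++ y :: a'' := by
        rw [List.append_sublist_append_left]
        exact (sublist_cons_iff).2 (Or.inr ⟨[], rfl, nil_sublist _⟩)
      exact this.trans (h1 ▸ hPT)
  · -- h1 : X = P ++ c', h2 : Q = c' ++ y :: Y
    have : y :: Y <+ Q := by rw [h2]; exact sublist_append_right _ _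
    exact this.trans hQU

/-- Mirror of `split_mid`. -/
lemma split_mid' {X Y T U : List α} {y : α} (h : (Y ++ [y]) ++ X <+ U ++ T)
    (hX : ¬ y :: X <+ T) : Y ++ [y] <+ U := by
  have h' : X.reverse ++ y :: Y.reverse <+ T.reverse ++ U.reverse := by
    have := h.reverse
    simpa [List.reverse_append] using this
  have hX' : ¬ X.reverse ++ [y] <+ T.reverse := by
    intro hc
    apply hX
    have := hc.reverse
    simpa using this
  have := (split_mid h' hX').reverse
  simpa using this

lemma cons_head_ne {x y : α} {X Y : List α} (h : x :: X <+ y :: Y) (hne : x ≠ y) :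
    x :: X <+ Y := by
  rcases sublist_cons_iff.1 h with h' | ⟨r, hr, _⟩
  · exact h'
  · simp at hr; exact absurd hr.1 hne

lemma cons_sub_tail {x y : α} {X Y : List α} (h : x :: X <+ y :: Y) : X <+ Y := by
  rcases sublist_cons_iff.1 h with h' | ⟨r, hr, hr'⟩
  · exact ((sublist_cons_self x X).trans h')
  · injection hr with _ h2; exact h2 ▸ hr'

/-- A proper sublist misses some position. -/
lemma sub_ne_split {C S : List α} (h : C <+ S) (hne : C ≠ S) :
    ∃ P x Q, S = P ++ x :: Q ∧ C <+ P ++ Q := by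
  induction h with
  | slnil => exact absurd rfl hne
  | cons a h ih =>
    exact ⟨[], a, _, rfl, h⟩
  | @cons_cons l₁ l₂ a h ih =>
    have hne' : l₁ ≠ l₂ := by rintro rfl; exact hne rfl
    obtain ⟨P, x, Q, hS, hC⟩ := ih hne'
    exact ⟨a :: P, x, Q, by rw [hS]; rfl, by simpa using hC.cons₂ a⟩

/-- Locate a distinguished element of a flatten inside its block. -/
lemma flatten_split {L : List (List α)} {P Q : List α} {x : α}
    (h : L.flatten = P ++ x :: Q) :
    ∃ i, ∃ (hi : i < L.length), ∃ U V, L[i] = U ++ x :: V ∧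
      P = (L.take i).flatten ++ U ∧ Q = V ++ (L.drop (i + 1)).flatten := by
  induction L generalizing P with
  | nil => simp at h
  | cons M L ih =>
    rw [flatten_cons] at h
    rcases append_eq_append_iff.1 h with ⟨a', h1, h2⟩ | ⟨c', h1, h2⟩
    · -- h1 : P = M ++ a', h2 : L.flatten = a' ++ x :: Q
      obtain ⟨i, hi, U, V, hL, hP, hQ⟩ := ih h2
      refine ⟨i + 1, by simpa using hi, U, V, by simpa using hL, ?_, ?_⟩
      · rw [h1, hP]; simp
      · simpa using hQ
    · -- h1 : M = P ++ c', h2 : x :: Q = c' ++ L.flatten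
      cases c' with
      | nil =>
        simp at h2
        obtain ⟨i, hi, U, V, hL, hP, hQ⟩ := ih (P := []) (by simpa using h2.symm)
        refine ⟨i + 1, by simpa using hi, U, V, by simpa using hL, ?_, ?_⟩
        · have h4 := hP.symm
          rw [List.append_eq_nil_iff] at h4
          simp at h1
          simp [h4.1, h4.2, ← h1]
        · simpa using hQ
      | cons z c'' =>
        have h23 : x = z ∧ Q = c'' ++ L.flatten := by simpa using h2
        exact ⟨0, by simp, P, c'', by simp [h1, h23.1], by simp, by simp [h23.2]⟩
lemma flatten_take_succ (L : List (List α)) (j : ℕ) (hj : j < L.length) :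
    (L.take (j+1)).flatten = (L.take j).flatten ++ L[j] := by
  rw [take_succ, getElem?_eq_getElem hj]
  simp only [Option.toList_some, flatten_append]
  simp

lemma chain {As Ss : List (List α)} (hlen : As.length = Ss.length)
    (hsub : ∀ i (h : i < As.length), As[i] <+ Ss[i]'(hlen ▸ h))
    (htight : ∀ i (h : i < As.length), ∀ d, (((As.drop (i+1)).flatten).head? = some d) →
      ¬ (As[i] ++ [d]) <+ Ss[i]'(hlen ▸ h)) :
    ∀ j, j ≤ As.length →
      ((As.take j).flatten <+ (Ss.take j).flatten) ∧
      ∀ d, ((As.drop j).flatten).head? = some d →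
        ¬ ((As.take j).flatten ++ [d]) <+ (Ss.take j).flatten := by
  intro j
  induction j with
  | zero =>
    intro _
    refine ⟨by simp, ?_⟩
    intro d hd
    simp [sublist_nil]
  | succ j ih =>
    intro hj1
    have hj : j < As.length := hj1
    have hjS : j < Ss.length := hlen ▸ hj
    obtain ⟨hsubj, htj⟩ := ih (le_of_lt hj)
    have hTA := flatten_take_succ As j hj
    have hTS := flatten_take_succ Ss j hjS
    constructor
    · rw [hTA, hTS]; exact hsubj.append (hsub j hj)
    · intro d hd hcon
      obtain ⟨y, K, hK⟩ : ∃ y K, As[j] ++ [d] = y :: K := by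
        cases h : As[j] with
        | nil => exact ⟨d, [], by simp⟩
        | cons z t => exact ⟨z, t ++ [d], by simp⟩
      have hdropj : (As.drop j).flatten = As[j] ++ (As.drop (j+1)).flatten := by
        rw [drop_eq_getElem_cons hj, flatten_cons]
      have hy : ((As.drop j).flatten).head? = some y := by
        rw [hdropj, head?_append, hd]
        have h2 : (As[j] ++ [d]).head? = some y := by rw [hK]; rfl
        rwa [head?_append] at h2
      have hcon' : (As.take j).flatten ++ y :: K <+ (Ss.take j).flatten ++ Ss[j] := by
        rw [← hK]
        rw [hTA, hTS] at hcon
        simpa [List.append_assoc] using hcon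
      have hfin := split_mid hcon' (htj y hy)
      rw [← hK] at hfin
      exact htight j hj d hd hfin

lemma chain2 {As Ss : List (List α)} (hlen : As.length = Ss.length)
    (hsub : ∀ i (h : i < As.length), As[i] <+ Ss[i]'(hlen ▸ h))
    (hleft : ∀ i (h : i < As.length), ∀ c, (((As.take i).flatten).getLast? = some c) →
      ¬ (c :: As[i]) <+ Ss[i]'(hlen ▸ h)) :
    ∀ j, j ≤ As.length →
      ((As.drop j).flatten <+ (Ss.drop j).flatten) ∧
      ∀ c, ((As.take j).flatten).getLast? = some c →
        ¬ (c :: (As.drop j).flatten) <+ (Ss.drop j).flatten := by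
  have key : ∀ k j, As.length - j ≤ k → j ≤ As.length →
      ((As.drop j).flatten <+ (Ss.drop j).flatten) ∧
      ∀ c, ((As.take j).flatten).getLast? = some c →
        ¬ (c :: (As.drop j).flatten) <+ (Ss.drop j).flatten := by
    intro k
    induction k with
    | zero =>
      intro j hk hj
      have hj' : j = As.length := by omega
      subst hj'
      rw [drop_length, hlen, drop_length]
      exact ⟨by simp, fun c _ => by simp [sublist_nil]⟩
    | succ k ih =>
      intro j hk hj
      rcases eq_or_lt_of_le hj with rfl | hj'
      · rw [drop_length, hlen, drop_length]
        exact ⟨by simp, fun c _ => by simp [sublist_nil]⟩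
      · have hjS : j < Ss.length := hlen ▸ hj'
        obtain ⟨ihs, iht⟩ := ih (j+1) (by omega) (by omega)
        have hDA : (As.drop j).flatten = As[j] ++ (As.drop (j+1)).flatten := by
          rw [drop_eq_getElem_cons hj', flatten_cons]
        have hDS : (Ss.drop j).flatten = Ss[j] ++ (Ss.drop (j+1)).flatten := by
          rw [drop_eq_getElem_cons hjS, flatten_cons]
        constructor
        · rw [hDA, hDS]; exact (hsub j hj').append ihs
        · intro c hc hcon
          obtain ⟨K, y, hK⟩ : ∃ K y, c :: As[j] = K ++ [y] := by
            rcases List.eq_nil_or_concat (c :: As[j]) with h | ⟨K, y, h⟩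
            · simp at h
            · exact ⟨K, y, by simpa [List.concat_eq_append] using h⟩
          have hTA := flatten_take_succ As j hj' 
          have hy : ((As.take (j+1)).flatten).getLast? = some y := by
            rw [hTA, getLast?_append, hc]
            have h2 : (c :: As[j]).getLast? = some y := by rw [hK]; simp
            have h3 : (c :: As[j]).getLast? = As[j].getLast?.or (some c) := by
              have : c :: As[j] = [c] ++ As[j] := rfl
              rw [this, getLast?_append]; rfl
            rw [h3] at h2; exact h2
          have hcon' : (K ++ [y]) ++ (As.drop (j+1)).flatten <+
              Ss[j] ++ (Ss.drop (j+1)).flatten := by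
            rw [← hK]
            rw [hDA, hDS] at hcon
            simpa using hcon
          have hfin := split_mid' hcon' (iht y hy)
          rw [← hK] at hfin
          exact hleft j hj' c hc hfin
  intro j hj
  exact key (As.length - j) j le_rfl hj

lemma flatten_drop_cons (L : List (List α)) (i : ℕ) (hi : i < L.length) :
    (L.drop i).flatten = L[i] ++ (L.drop (i+1)).flatten := by
  rw [drop_eq_getElem_cons hi, flatten_cons]

lemma flatten_parts (L : List (List α)) (i : ℕ) :
    L.flatten = (L.take i).flatten ++ (L.drop i).flatten := by
  rw [← flatten_append, take_append_drop]

lemma no_embed {As Ss : List (List α)} (hlen : As.length = Ss.length)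
    (hsub : ∀ i (h : i < As.length), As[i] <+ Ss[i]'(hlen ▸ h))
    (htight : ∀ i (h : i < As.length), ∀ d, (((As.drop (i+1)).flatten).head? = some d) →
      ¬ (As[i] ++ [d]) <+ Ss[i]'(hlen ▸ h))
    (hleft : ∀ i (h : i < As.length), ∀ c, (((As.take i).flatten).getLast? = some c) →
      ¬ (c :: As[i]) <+ Ss[i]'(hlen ▸ h))
    {i : ℕ} (hi : i < As.length) {U V : List α} {x : α}
    (hblock : Ss[i]'(hlen ▸ hi) = U ++ x :: V)
    (howner : As[i] = Ss[i]'(hlen ▸ hi)) :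
    ¬ As.flatten <+ ((Ss.take i).flatten ++ U) ++ (V ++ (Ss.drop (i+1)).flatten) := by
  intro hA
  have hiS : i < Ss.length := hlen ▸ hi
  have hAi : As[i] = U ++ x :: V := howner.trans hblock
  set Fa := (As.take i).flatten with hFa
  set Da := (As.drop (i+1)).flatten with hDa
  set Fs := (Ss.take i).flatten with hFs
  set Ds := (Ss.drop (i+1)).flatten with hDs
  have hAflat : As.flatten = Fa ++ ((U ++ x :: V) ++ Da) := by
    rw [flatten_parts As i, flatten_drop_cons As i hi, hAi]
  rcases sublist_append_iff.1 hA with ⟨X, Z, hXZ, hXL, hZR⟩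
  have hlen1 : X.length + Z.length = Fa.length + U.length + 1 + (V.length + Da.length) := by
    have := congrArg List.length hXZ
    rw [hAflat] at this
    simp at this
    omega
  by_cases hcase : Fa.length + U.length + 1 ≤ X.length
  · -- the prefix Fa ++ U ++ [x] of As.flatten embeds into Fs ++ U : contradiction
    have hWpre : (Fa ++ (U ++ [x])) <+: As.flatten := by
      rw [hAflat]
      refine ⟨V ++ Da, ?_⟩
      simp
    have hXpre : X <+: As.flatten := by rw [hXZ]; exact prefix_append _ _
    have hWX : (Fa ++ (U ++ [x])) <+: X := by
      refine prefix_of_prefix_length_le hWpre hXpre ?_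
      simp; omega
    have hWsub : Fa ++ (U ++ [x]) <+ Fs ++ U := hWX.sublist.trans hXL
    obtain ⟨y, K, hK⟩ : ∃ y K, U ++ [x] = y :: K := by
      cases h : U with
      | nil => exact ⟨x, [], by simp⟩
      | cons z t => exact ⟨z, t ++ [x], by simp⟩
    have hy : ((As.drop i).flatten).head? = some y := by
      rw [flatten_drop_cons As i hi, hAi]
      have h2 : (U ++ [x]).head? = some y := by rw [hK]; rfl
      rw [head?_append] at h2
      simp only [head?_cons] at h2
      rw [append_assoc, head?_append]
      simp only [cons_append, head?_cons]
      exact h2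
    have hnot := (chain hlen hsub htight i (le_of_lt hi)).2 y hy
    rw [hK] at hWsub
    have hfin := split_mid hWsub hnot
    have hl1 := hfin.length_le
    have hl2 := congrArg List.length hK
    simp at hl1 hl2
    omega
  · -- the suffix [x] ++ V ++ Da embeds into V ++ Ds : contradiction
    have hWsuf : (x :: (V ++ Da)) <:+ As.flatten := by
      rw [hAflat]
      refine ⟨Fa ++ U, ?_⟩
      simp
    have hZsuf : Z <:+ As.flatten := by rw [hXZ]; exact suffix_append _ _
    have hWZ : (x :: (V ++ Da)) <:+ Z := by
      refine suffix_of_suffix_length_le hWsuf hZsuf ?_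
      simp; omega
    have hWsub : x :: (V ++ Da) <+ V ++ Ds := hWZ.sublist.trans hZR
    obtain ⟨K, y, hK⟩ : ∃ K y, x :: V = K ++ [y] := by
      rcases List.eq_nil_or_concat (x :: V) with h | ⟨K, y, h⟩
      · simp at h
      · exact ⟨K, y, by simpa [List.concat_eq_append] using h⟩
    have hy : ((As.take (i+1)).flatten).getLast? = some y := by
      rw [flatten_take_succ As i hi, hAi]
      have h2 : (x :: V).getLast? = some y := by rw [hK]; simp
      rw [getLast?_append, getLast?_append, h2]
      simp
    have hnot := (chain2 hlen hsub hleft (i+1) (by omega)).2 y hy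
    have hWsub' : (K ++ [y]) ++ Da <+ V ++ Ds := by
      rw [← hK]; simpa using hWsub
    have := split_mid' hWsub' hnot
    rw [← hK] at this
    have hl1 := this.length_le
    simp at hl1

lemma backward {A B S : List α} {l : ℕ} (hl : 1 ≤ l) {As Bs Ss : List (List α)}
    (hAl : As.length = l) (hBl : Bs.length = l) (hSl : Ss.length = l)
    (hAf : A = As.flatten) (hBf : B = Bs.flatten) (hSf : S = Ss.flatten)
    (hcond : ∀ i, i < l →
      FillsBlock ((As.take i).flatten) As[i]! ((As.drop (i + 1)).flatten) Ss[i]! ∧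
      FillsBlock ((Bs.take i).flatten) Bs[i]! ((Bs.drop (i + 1)).flatten) Ss[i]! ∧
      (Ss[i]! = As[i]! ∨ Ss[i]! = Bs[i]!)) :
    IsMinimalCommonSupseq A B S := by
  have hlenAS : As.length = Ss.length := by rw [hAl, hSl]
  have hlenBS : Bs.length = Ss.length := by rw [hBl, hSl]
  have hsubA : ∀ i (h : i < As.length), As[i] <+ Ss[i]'(hlenAS ▸ h) := by
    intro i h
    have hc := (hcond i (hAl ▸ h)).1.1
    rwa [getElem!_pos As i h, getElem!_pos Ss i (hlenAS ▸ h)] at hc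
  have htightA : ∀ i (h : i < As.length), ∀ d, (((As.drop (i+1)).flatten).head? = some d) →
      ¬ (As[i] ++ [d]) <+ Ss[i]'(hlenAS ▸ h) := by
    intro i h d hd
    have hc := (hcond i (hAl ▸ h)).1.2.2 d hd
    rwa [getElem!_pos As i h, getElem!_pos Ss i (hlenAS ▸ h)] at hc
  have hleftA : ∀ i (h : i < As.length), ∀ c, (((As.take i).flatten).getLast? = some c) →
      ¬ (c :: As[i]) <+ Ss[i]'(hlenAS ▸ h) := by
    intro i h c hc0
    have hc := (hcond i (hAl ▸ h)).1.2.1 c hc0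
    rwa [getElem!_pos As i h, getElem!_pos Ss i (hlenAS ▸ h)] at hc
  have hsubB : ∀ i (h : i < Bs.length), Bs[i] <+ Ss[i]'(hlenBS ▸ h) := by
    intro i h
    have hc := (hcond i (hBl ▸ h)).2.1.1
    rwa [getElem!_pos Bs i h, getElem!_pos Ss i (hlenBS ▸ h)] at hc
  have htightB : ∀ i (h : i < Bs.length), ∀ d, (((Bs.drop (i+1)).flatten).head? = some d) →
      ¬ (Bs[i] ++ [d]) <+ Ss[i]'(hlenBS ▸ h) := by
    intro i h d hd
    have hc := (hcond i (hBl ▸ h)).2.1.2.2 d hd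
    rwa [getElem!_pos Bs i h, getElem!_pos Ss i (hlenBS ▸ h)] at hc
  have hleftB : ∀ i (h : i < Bs.length), ∀ c, (((Bs.take i).flatten).getLast? = some c) →
      ¬ (c :: Bs[i]) <+ Ss[i]'(hlenBS ▸ h) := by
    intro i h c hc0
    have hc := (hcond i (hBl ▸ h)).2.1.2.1 c hc0
    rwa [getElem!_pos Bs i h, getElem!_pos Ss i (hlenBS ▸ h)] at hc
  have hor : ∀ i (h : i < Ss.length),
      Ss[i] = As[i]'(hlenAS.symm ▸ h) ∨ Ss[i] = Bs[i]'(hlenBS.symm ▸ h) := by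
    intro i h
    have hc := (hcond i (hSl ▸ h)).2.2
    rwa [getElem!_pos Ss i h, getElem!_pos As i (hlenAS.symm ▸ h),
      getElem!_pos Bs i (hlenBS.symm ▸ h)] at hc
  have hAS : A <+ S := by
    rw [hAf, hSf]
    have h := (chain hlenAS hsubA htightA As.length le_rfl).1
    rwa [take_length, hlenAS, take_length] at h
  have hBS : B <+ S := by
    rw [hBf, hSf]
    have h := (chain hlenBS hsubB htightB Bs.length le_rfl).1
    rwa [take_length, hlenBS, take_length] at h
  refine ⟨⟨hAS, hBS⟩, ?_⟩
  intro C' hsub' hne hcs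
  obtain ⟨P, x, Q, hSplit, hC⟩ := sub_ne_split hsub' hne
  obtain ⟨i, hi, U, V, hblock, hP, hQ⟩ := flatten_split (L := Ss) (by rw [← hSf, hSplit])
  have hiA : i < As.length := hlenAS.symm ▸ hi
  have hiB : i < Bs.length := hlenBS.symm ▸ hi
  have hAC : As.flatten <+ ((Ss.take i).flatten ++ U) ++ (V ++ (Ss.drop (i+1)).flatten) := by
    have h := (hcs.1.trans hC)
    rw [hP, hQ] at h
    rw [← hAf]
    exact h
  have hBC : Bs.flatten <+ ((Ss.take i).flatten ++ U) ++ (V ++ (Ss.drop (i+1)).flatten) := by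
    have h := (hcs.2.trans hC)
    rw [hP, hQ] at h
    rw [← hBf]
    exact h
  rcases hor i hi with h | h
  · exact no_embed hlenAS hsubA htightA hleftA hiA hblock h.symm hAC
  · exact no_embed hlenBS hsubB htightB hleftB hiB hblock h.symm hBC

def octx : Option α → List α
  | none => []
  | some c => [c]

@[simp] lemma octx_getLast? (o : Option α) : (octx o).getLast? = o := by
  cases o <;> simp [octx]

/-- Block decomposition with left contexts. -/
def Dec (a b : Option α) (A B S : List α) : Prop :=
  ∃ l, 1 ≤ l ∧ ∃ As Bs Ss : List (List α),
    As.length = l ∧ Bs.length = l ∧ Ss.length = l ∧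
    A = As.flatten ∧ B = Bs.flatten ∧ S = Ss.flatten ∧
    ∀ i, i < l →
      FillsBlock (octx a ++ (As.take i).flatten) As[i]! ((As.drop (i + 1)).flatten) Ss[i]! ∧
      FillsBlock (octx b ++ (Bs.take i).flatten) Bs[i]! ((Bs.drop (i + 1)).flatten) Ss[i]! ∧
      (Ss[i]! = As[i]! ∨ Ss[i]! = Bs[i]!)

lemma Dec_swap {a b : Option α} {A B S : List α} (h : Dec a b A B S) : Dec b a B A S := by
  obtain ⟨l, hl, As, Bs, Ss, h1, h2, h3, h4, h5, h6, h7⟩ := h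
  exact ⟨l, hl, Bs, As, Ss, h2, h1, h3, h5, h4, h6, fun i hi =>
    ⟨(h7 i hi).2.1, (h7 i hi).1, (h7 i hi).2.2.symm⟩⟩

lemma fills_congr {P P' M Q T : List α} (h : P.getLast? = P'.getLast?) :
    FillsBlock P M Q T ↔ FillsBlock P' M Q T := by
  unfold FillsBlock; rw [h]

lemma dec_nil (oa ob : Option α) : Dec (α := α) oa ob [] [] [] := by
  refine ⟨1, le_rfl, [[]], [[]], [[]], rfl, rfl, rfl, by simp, by simp, by simp, ?_⟩
  intro i hi
  have hi0 : i = 0 := by omega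
  subst hi0
  refine ⟨⟨by simp, ?_, ?_⟩, ⟨by simp, ?_, ?_⟩, by simp⟩
  · intro c hc hcon; simp [sublist_nil] at hcon
  · intro d hd; simp at hd
  · intro c hc hcon; simp [sublist_nil] at hcon
  · intro d hd; simp at hd

lemma stepA {S' A B : List α} {s : α} {oa ob : Option α}
    (IH : ∀ (S₂ A₂ B₂ : List α) (oa₂ ob₂ : Option α), S₂.length < (s :: S').length →
      A₂ <+ S₂ → B₂ <+ S₂ →
      (∀ P x Q, S₂ = P ++ x :: Q → ¬ (A₂ <+ P ++ Q ∧ B₂ <+ P ++ Q)) →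
      (∀ c, oa₂ = some c → ¬ (c :: A₂) <+ S₂) →
      (∀ c, ob₂ = some c → ¬ (c :: B₂) <+ S₂) →
      Dec oa₂ ob₂ A₂ B₂ S₂)
    (hA : A <+ s :: S') (hB : B <+ s :: S')
    (hmin : ∀ P x Q, s :: S' = P ++ x :: Q → ¬ (A <+ P ++ Q ∧ B <+ P ++ Q))
    (hca : ∀ c, oa = some c → ¬ (c :: A) <+ s :: S')
    (hcb : ∀ c, ob = some c → ¬ (c :: B) <+ s :: S')
    (howner : ¬ A <+ S') : Dec oa ob A B (s :: S') := by
  classical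
  set S : List α := s :: S' with hSdef
  obtain ⟨A₀, hA0, hA0'⟩ : ∃ A₀, A = s :: A₀ ∧ A₀ <+ S' := by
    rcases sublist_cons_iff.1 hA with h | ⟨r, hr, hr'⟩
    · exact absurd h howner
    · exact ⟨r, hr, hr'⟩
  have hAlen1 : 1 ≤ A.length := by rw [hA0]; simp
  set Stab : ℕ → Prop := fun j => 1 ≤ j ∧ A.take j = S.take j ∧ ¬ (A.drop (j-1) <+ S.drop j)
    with hStabdef
  have hStab1 : Stab 1 := by
    refine ⟨le_rfl, ?_, ?_⟩
    · rw [hA0]; rfl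
    · simpa [hSdef] using howner
  set j' : ℕ := Nat.findGreatest Stab A.length with hj'def
  have hjStab : Stab j' := Nat.findGreatest_spec hAlen1 hStab1
  have hj1 : 1 ≤ j' := hjStab.1
  have hjA : j' ≤ A.length := Nat.findGreatest_le _
  have hjmax : ∀ k, j' < k → k ≤ A.length → ¬ Stab k := by
    intro k h1 h2
    exact Nat.findGreatest_is_greatest h1 h2
  set p : List α := A.take j' with hpdef
  set A' : List α := A.drop j' with hA'def
  set S'' : List α := S.drop j' with hS''def
  have hpS : p = S.take j' := hjStab.2.1
  have hstab : ¬ A.drop (j'-1) <+ S'' := hjStab.2.2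
  have hAeq : A = p ++ A' := (take_append_drop _ _).symm
  have hSeq : S = p ++ S'' := by rw [hpS]; exact (take_append_drop _ _).symm
  have hplen : p.length = j' := by rw [hpdef, length_take]; omega
  have hA'S : A' <+ S'' := by
    have h : p ++ A' <+ p ++ S'' := by rw [← hAeq, ← hSeq]; exact hA
    exact (List.append_sublist_append_left p).1 h
  have hj1A : j' - 1 < A.length := by omega
  have hlast : p.getLast? = some (A[j'-1]'hj1A) := by
    rw [getLast?_eq_getElem?, hplen, hpdef, getElem?_take, if_pos (by omega),
      getElem?_eq_getElem hj1A]
  have hdropA : A.drop (j'-1) = (A[j'-1]'hj1A) :: A' := by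
    have h9 : j' - 1 + 1 = j' := Nat.sub_add_cancel hj1
    rw [drop_eq_getElem_cons hj1A, h9, hA'def]
  have htail : S'' ≠ [] → A' <+ S''.drop 1 := by
    intro hS''ne
    have hdd : S''.drop 1 = S.drop (j'+1) := by rw [hS''def, drop_drop]
    rcases eq_or_lt_of_le hjA with heq | hlt
    · have hA'nil : A' = [] := by rw [hA'def, heq, drop_length]
      rw [hA'nil]; exact nil_sublist _
    · by_cases hd : A.drop j' <+ S.drop (j'+1)
      · rw [hdd]; exact hd
      · have htk : A.take (j'+1) ≠ S.take (j'+1) := by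
          intro h
          exact hjmax (j'+1) (by omega) (by omega) ⟨by omega, h, by simpa using hd⟩
        cases hSj : S[j']? with
        | none =>
          rw [List.getElem?_eq_none_iff] at hSj
          exfalso
          apply hS''ne
          rw [hS''def]
          exact drop_eq_nil_of_le hSj
        | some t =>
          obtain ⟨hjS, hSt⟩ := List.getElem?_eq_some_iff.1 hSj
          have hne : A[j']'hlt ≠ t := by
            intro h
            apply htk
            rw [take_succ, take_succ, hSj, getElem?_eq_getElem hlt, h, ← hpS, hpdef]
          have hA'eq : A' = (A[j']'hlt) :: A.drop (j'+1) := by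
            rw [hA'def]; exact drop_eq_getElem_cons hlt
          have hS''eq : S'' = t :: S.drop (j'+1) := by
            rw [hS''def, drop_eq_getElem_cons hjS, hSt]
          have h2 : (A[j']'hlt) :: A.drop (j'+1) <+ t :: S.drop (j'+1) := by
            rw [← hA'eq, ← hS''eq]; exact hA'S
          have h3 := cons_head_ne h2 hne
          rw [hdd, hA'eq]
          exact h3
  -- the B side
  have hex : ∃ j, B.drop j <+ S'' := ⟨B.length, by simp⟩
  set j₀ : ℕ := Nat.find hex with hj₀def
  set b : List α := B.take j₀ with hbdef
  set B' : List α := B.drop j₀ with hB'def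
  have hB' : B' <+ S'' := Nat.find_spec hex
  have hmin₀ : ∀ k, k < j₀ → ¬ B.drop k <+ S'' := fun k hk => Nat.find_min hex hk
  have hj₀B : j₀ ≤ B.length := Nat.find_min' hex (by simp)
  have hBeq : B = b ++ B' := (take_append_drop _ _).symm
  have hbp : b <+ p := by
    have hBps : B <+ p ++ S'' := by rw [← hSeq]; exact hB
    rcases sublist_append_iff.1 hBps with ⟨X, Y, hXY, hXp, hYS⟩
    have hYdrop : B.drop X.length = Y := by rw [hXY]; exact drop_left
    have hj0X : j₀ ≤ X.length := Nat.find_min' hex (by rw [hYdrop]; exact hYS)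
    have hXpre : X = B.take X.length := by rw [hXY]; exact take_left.symm
    have hbX : b = (B.take X.length).take j₀ := by
      rw [take_take, min_eq_left hj0X]
    have : b <+: X := by rw [hbX, ← hXpre]; exact take_prefix _ _
    exact this.sublist.trans hXp
  have crux : ∀ d, B'.head? = some d → ¬ (b ++ [d]) <+ p := by
    intro d hd hcon
    obtain ⟨B'', hB''⟩ : ∃ B'', B' = d :: B'' := by
      cases hB'h : B' with
      | nil => rw [hB'h] at hd; simp at hd
      | cons e t =>
        rw [hB'h] at hd
        simp at hd
        exact ⟨t, by rw [hd]⟩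
    obtain ⟨s₂, S₃, hS''⟩ : ∃ s₂ S₃, S'' = s₂ :: S₃ := by
      cases hs : S'' with
      | nil =>
        rw [hs, hB''] at hB'
        simp [sublist_nil] at hB'
      | cons a t => exact ⟨a, t, rfl⟩
    refine hmin p s₂ S₃ (by rw [hSeq, hS'']) ⟨?_, ?_⟩
    · rw [hAeq]
      refine Sublist.append (Sublist.refl p) ?_
      have h5 := htail (by rw [hS'']; simp)
      rw [hS''] at h5
      simpa using h5
    · have hB''S : B'' <+ S₃ := by
        have h6 : d :: B'' <+ s₂ :: S₃ := by rw [← hB'', ← hS'']; exact hB'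
        exact cons_sub_tail h6
      have h7 : B = (b ++ [d]) ++ B'' := by rw [hBeq, hB'']; simp
      rw [h7]
      exact hcon.append hB''S
  -- recursion
  have hS''len : S''.length < S.length := by
    rw [hS''def, length_drop]
    have : 1 ≤ S.length := by rw [hSdef]; simp
    omega
  have hminrec : ∀ P x Q, S'' = P ++ x :: Q → ¬ (A' <+ P ++ Q ∧ B' <+ P ++ Q) := by
    rintro P x Q hQe ⟨h1, h2⟩
    refine hmin (p ++ P) x Q (by rw [hSeq, hQe, append_assoc]) ⟨?_, ?_⟩
    · rw [hAeq, append_assoc]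
      exact Sublist.append (Sublist.refl p) h1
    · rw [hBeq, append_assoc]
      exact hbp.append h2
  have hcarec : ∀ c, some (A[j'-1]'hj1A) = some c → ¬ c :: A' <+ S'' := by
    intro c hc hcon
    have hc' : A[j'-1]'hj1A = c := by injection hc
    apply hstab
    rw [hdropA, hc']
    exact hcon
  set ob' : Option α := (octx ob ++ b).getLast? with hob'def
  have hcbrec : ∀ c, ob' = some c → ¬ c :: B' <+ S'' := by
    intro c hc hcon
    by_cases hb : b = []
    · have hj₀0 : B' = B := by
        rw [hbdef, take_eq_nil_iff] at hb
        rcases hb with hb | hb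
        · rw [hB'def, hb]; simp
        · rw [hB'def, hb]; simp [hb]
      rw [hob'def, hb] at hc
      simp at hc
      apply hcb c hc
      rw [hSeq]
      have : c :: B <+ S'' := by rw [← hj₀0]; exact hcon
      calc c :: B <+ S'' := this
        _ <+ p ++ S'' := sublist_append_right _ _
    · have hj₀1 : 1 ≤ j₀ := by
        by_contra h
        apply hb
        rw [hbdef]
        have : j₀ = 0 := by omega
        rw [this]; simp
      have hj₀lt : j₀ - 1 < B.length := by omega
      have hbl : b.getLast? = some (B[j₀-1]'hj₀lt) := by
        rw [hbdef, getLast?_eq_getElem?, length_take, min_eq_left hj₀B, getElem?_take,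
          if_pos (by omega), getElem?_eq_getElem hj₀lt]
      rw [hob'def, getLast?_append, hbl] at hc
      simp at hc
      apply hmin₀ (j₀-1) (by omega)
      rw [drop_eq_getElem_cons hj₀lt, Nat.sub_add_cancel hj₀1, ← hB'def, hc]
      exact hcon
  obtain ⟨l', hl', As', Bs', Ss', hLa, hLb, hLs, hfa, hfb, hfs, hcond'⟩ :=
    IH S'' A' B' (some (A[j'-1]'hj1A)) ob' hS''len hA'S hB' hminrec hcarec hcbrec
  refine ⟨l' + 1, by omega, p :: As', b :: Bs', p :: Ss',
    by simp [hLa], by simp [hLb], by simp [hLs],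
    by rw [flatten_cons, ← hfa, ← hAeq],
    by rw [flatten_cons, ← hfb, ← hBeq],
    by rw [flatten_cons, ← hfs, ← hSeq], ?_⟩
  intro i hi
  cases i with
  | zero =>
    simp only [getElem!_cons_zero, take_zero, flatten_nil, append_nil, drop_succ_cons,
      drop_zero, flatten_cons]
    refine ⟨⟨Sublist.refl p, ?_, ?_⟩, ⟨hbp, ?_, ?_⟩, by simp⟩
    · intro c hc hcon
      have := hcon.length_le
      simp at this
    · intro d hd hcon
      have := hcon.length_le
      simp at this
    · intro c hc hcon
      rw [octx_getLast?] at hc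
      apply hcb c hc
      have h8 : c :: B = (c :: b) ++ B' := by rw [hBeq]; rfl
      rw [hSeq, h8]
      exact hcon.append hB'
    · intro d hd hcon
      rw [← hfb] at hd
      exact crux d hd hcon
  | succ i =>
    have hcc := hcond' i (by omega)
    simp only [getElem!_cons_succ, take_succ_cons, drop_succ_cons, flatten_cons]
    refine ⟨?_, ?_, hcc.2.2⟩
    · have hgl : (octx oa ++ (p ++ (As'.take i).flatten)).getLast? =
          (octx (some (A[j'-1]'hj1A)) ++ (As'.take i).flatten).getLast? := by
        simp [getLast?_append, Option.or_assoc, hlast]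
      exact (fills_congr hgl).2 hcc.1
    · have hgl : (octx ob ++ (b ++ (Bs'.take i).flatten)).getLast? =
          (octx ob' ++ (Bs'.take i).flatten).getLast? := by
        simp [getLast?_append, Option.or_assoc, hob'def]
      exact (fills_congr hgl).2 hcc.2.1

lemma G : ∀ (n : ℕ) (S A B : List α) (oa ob : Option α), S.length ≤ n →
    A <+ S → B <+ S →
    (∀ P x Q, S = P ++ x :: Q → ¬ (A <+ P ++ Q ∧ B <+ P ++ Q)) →
    (∀ c, oa = some c → ¬ (c :: A) <+ S) →
    (∀ c, ob = some c → ¬ (c :: B) <+ S) →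
    Dec oa ob A B S := by
  intro n
  induction n with
  | zero =>
    intro S A B oa ob hn hA hB hmin hca hcb
    have hS : S = [] := by
      cases S with
      | nil => rfl
      | cons a t => simp at hn
    subst hS
    rw [sublist_nil] at hA hB
    subst hA; subst hB
    exact dec_nil oa ob
  | succ n ih =>
    intro S A B oa ob hn hA hB hmin hca hcb
    cases S with
    | nil =>
      rw [sublist_nil] at hA hB
      subst hA; subst hB
      exact dec_nil oa ob
    | cons s S' =>
      have IH' : ∀ (S₂ A₂ B₂ : List α) (oa₂ ob₂ : Option α), S₂.length < (s :: S').length →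
          A₂ <+ S₂ → B₂ <+ S₂ →
          (∀ P x Q, S₂ = P ++ x :: Q → ¬ (A₂ <+ P ++ Q ∧ B₂ <+ P ++ Q)) →
          (∀ c, oa₂ = some c → ¬ (c :: A₂) <+ S₂) →
          (∀ c, ob₂ = some c → ¬ (c :: B₂) <+ S₂) →
          Dec oa₂ ob₂ A₂ B₂ S₂ := by
        intro S₂ A₂ B₂ oa₂ ob₂ hlt
        apply ih
        have : (s :: S').length ≤ n + 1 := hn
        simp at this hlt ⊢
        omega
      by_cases howner : A <+ S'
      · have hBo : ¬ B <+ S' := by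
          intro hb
          exact hmin [] s S' rfl ⟨by simpa using howner, by simpa using hb⟩
        have IH'' : ∀ (S₂ A₂ B₂ : List α) (oa₂ ob₂ : Option α), S₂.length < (s :: S').length →
            A₂ <+ S₂ → B₂ <+ S₂ →
            (∀ P x Q, S₂ = P ++ x :: Q → ¬ (A₂ <+ P ++ Q ∧ B₂ <+ P ++ Q)) →
            (∀ c, oa₂ = some c → ¬ (c :: A₂) <+ S₂) →
            (∀ c, ob₂ = some c → ¬ (c :: B₂) <+ S₂) →
            Dec oa₂ ob₂ A₂ B₂ S₂ := IH'
        have hmin' : ∀ P x Q, s :: S' = P ++ x :: Q → ¬ (B <+ P ++ Q ∧ A <+ P ++ Q) := by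
          intro P x Q h hh
          exact hmin P x Q h ⟨hh.2, hh.1⟩
        exact Dec_swap (stepA IH'' hB hA hmin' hcb hca hBo)
      · exact stepA IH' hA hB hmin hca hcb howner

lemma forward {A B S : List α} (h : IsMinimalCommonSupseq A B S) :
    ∃ l : ℕ, 1 ≤ l ∧ ∃ As Bs Ss : List (List α),
      As.length = l ∧ Bs.length = l ∧ Ss.length = l ∧
      A = As.flatten ∧ B = Bs.flatten ∧ S = Ss.flatten ∧
      ∀ i, i < l →
        FillsBlock ((As.take i).flatten) As[i]! ((As.drop (i + 1)).flatten) Ss[i]! ∧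
        FillsBlock ((Bs.take i).flatten) Bs[i]! ((Bs.drop (i + 1)).flatten) Ss[i]! ∧
        (Ss[i]! = As[i]! ∨ Ss[i]! = Bs[i]!) := by
  have hmin' : ∀ P x Q, S = P ++ x :: Q → ¬ (A <+ P ++ Q ∧ B <+ P ++ Q) := by
    intro P x Q hq hc
    refine h.2 (P ++ Q) ?_ ?_ ⟨hc.1, hc.2⟩
    · rw [hq]
      exact Sublist.append (Sublist.refl P) (sublist_cons_self x Q)
    · intro he
      have := congrArg List.length he
      rw [hq] at this
      simp at this
  have hd := G S.length S A B none none le_rfl h.1.1 h.1.2 hmin'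
    (by intro c hc; exact absurd hc (by simp)) (by intro c hc; exact absurd hc (by simp))
  obtain ⟨l, hl, As, Bs, Ss, h1, h2, h3, h4, h5, h6, h7⟩ := hd
  refine ⟨l, hl, As, Bs, Ss, h1, h2, h3, h4, h5, h6, ?_⟩
  intro i hi
  have hc := h7 i hi
  simpa [octx] using hc

end MCSAux

/-- `S` is a minimal common supersequence of `A` and `B` iff `A`, `B`, `S` admit
block decompositions `A = A₁⋯A_l`, `B = B₁⋯B_l`, `S = S₁⋯S_l` (`l ≥ 1`) such
that each `A_i` and each `B_i` fills `S_i` in its context, and each `S_i`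
equals `A_i` or `B_i`. -/
theorem stmt_10 {α : Type*} (A B S : List α) :
    IsMinimalCommonSupseq A B S ↔
      ∃ l : ℕ, 1 ≤ l ∧ ∃ As Bs Ss : List (List α),
        As.length = l ∧ Bs.length = l ∧ Ss.length = l ∧
        A = As.flatten ∧ B = Bs.flatten ∧ S = Ss.flatten ∧
        ∀ i, i < l →
          FillsBlock ((As.take i).flatten) As[i]! ((As.drop (i + 1)).flatten) Ss[i]! ∧
          FillsBlock ((Bs.take i).flatten) Bs[i]! ((Bs.drop (i + 1)).flatten) Ss[i]! ∧
          (Ss[i]! = As[i]! ∨ Ss[i]! = Bs[i]!) := by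
  constructor
  · exact MCSAux.forward
  · rintro ⟨l, hl, As, Bs, Ss, h1, h2, h3, h4, h5, h6, h7⟩
    exact MCSAux.backward hl h1 h2 h3 h4 h5 h6 h7
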